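/- Let d and r be positive integers and k ∈ ℤ_{++}^{r} (with the convention k_{r+1} := 0). Then: (a) in ℂ[X], the polynomial ∏_{1≤i<j≤r+1}(X − 1 − d(i+j−3)/2)_{k_i+k_j} divides the polynomial ∏_{1≤i≤j≤r}(X − 1 − d(i+j−2)/2)_{k_i+k_j}; let R ∈ ℂ[X] denote the quotient, so that C̃^d(ν,k) = R(ν). (b) If in addition 1 ≤ m₁ ≤ m₂ ≤ r, k₁ = ⋯ = k_{m₁}, and k_{m₂+1} = 0, then: if k₁ ≥ 1, every zero ν ∈ ℂ of R is real and satisfies (d/2)(m₁−1) − 2k₁ + 2 ≤ ν ≤ d(m₂−1) − k_{m₂} + 1; and if k₁ = 0 then R is the constant polynomial 1. (c) In particular, for m = 0, 1, …, r−1, if k_{m+1} = 0, then R(λ+μ) ≠ 0 for all real λ, μ with λ ≥ dm/2 and μ ≥ dm/2. -/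

import Mathlib

open Polynomial Finset

/-- `(X - c)_m := ∏_{t=0}^{m-1} (X - c + t)` in `ℂ[X]`. -/
noncomputable def pochPoly (c : ℂ) (m : ℕ) : Polynomial ℂ :=
  ∏ t ∈ Finset.range m, (Polynomial.X - Polynomial.C c + (t : Polynomial ℂ))

/-- The numerator `∏_{1≤i≤j≤r}(X − 1 − d(i+j−2)/2)_{k_i+k_j}` of `C̃^d`. -/
noncomputable def numerT (d r : ℕ) (k : ℕ → ℕ) : Polynomial ℂ :=
  ∏ i ∈ Finset.Icc 1 r, ∏ j ∈ Finset.Icc i r,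
    pochPoly (1 + (d : ℂ) * ((i : ℂ) + (j : ℂ) - 2) / 2) (k i + k j)

/-- The denominator `∏_{1≤i<j≤r+1}(X − 1 − d(i+j−3)/2)_{k_i+k_j}` of `C̃^d`. -/
noncomputable def denomT (d r : ℕ) (k : ℕ → ℕ) : Polynomial ℂ :=
  ∏ i ∈ Finset.Icc 1 (r + 1), ∏ j ∈ Finset.Icc (i + 1) (r + 1),
    pochPoly (1 + (d : ℂ) * ((i : ℂ) + (j : ℂ) - 3) / 2) (k i + k j)

noncomputable def QT (d r : ℕ) (k : ℕ → ℕ) : Polynomial ℂ :=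
  ∏ i ∈ Finset.Icc 1 r, ∏ j ∈ Finset.Icc i r,
    ∏ t ∈ Finset.Ico (k i + k (j+1)) (k i + k j),
      (Polynomial.X - Polynomial.C (1 + (d : ℂ) * ((i : ℂ) + (j : ℂ) - 2) / 2)
        + (t : Polynomial ℂ))

lemma pochPoly_monic (c : ℂ) (m : ℕ) : (pochPoly c m).Monic := by
  apply monic_prod_of_monic
  intro t _
  have h : Polynomial.X - Polynomial.C c + (t : Polynomial ℂ)
      = Polynomial.X + Polynomial.C ((t : ℂ) - c) := by
    rw [show ((t : ℕ) : Polynomial ℂ) = Polynomial.C (t : ℂ) by simp, Polynomial.C_sub]; ring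
  rw [h]; exact monic_X_add_C _

lemma denomT_monic (d r : ℕ) (k : ℕ → ℕ) : (denomT d r k).Monic := by
  apply monic_prod_of_monic; intro i _
  apply monic_prod_of_monic; intro j _
  exact pochPoly_monic _ _

lemma denomT_reindex (d r : ℕ) (k : ℕ → ℕ) :
    denomT d r k = ∏ i ∈ Finset.Icc 1 r, ∏ j ∈ Finset.Icc i r,
      pochPoly (1 + (d : ℂ) * ((i : ℂ) + (j : ℂ) - 2) / 2) (k i + k (j+1)) := by
  unfold denomT
  rw [Finset.prod_Icc_succ_top (by omega : 1 ≤ r + 1)]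
  have h2 : Finset.Icc (r + 1 + 1) (r + 1) = (∅ : Finset ℕ) := by
    apply Finset.Icc_eq_empty; omega
  rw [h2, Finset.prod_empty, mul_one]
  apply Finset.prod_congr rfl
  intro i _
  rw [← Finset.map_add_right_Icc i r 1, Finset.prod_map]
  apply Finset.prod_congr rfl
  intro j _
  simp only [addRightEmbedding_apply]
  congr 1
  push_cast; ring

lemma QT_mul_denomT (d r : ℕ) (k : ℕ → ℕ)
    (hk : ∀ i j, 1 ≤ i → i ≤ j → j ≤ r → k j ≤ k i) (hk0 : k (r + 1) = 0) :
    QT d r k * denomT d r k = numerT d r k := by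
  rw [denomT_reindex]
  unfold QT numerT
  rw [← Finset.prod_mul_distrib]
  apply Finset.prod_congr rfl
  intro i hi
  rw [← Finset.prod_mul_distrib]
  apply Finset.prod_congr rfl
  intro j hj
  simp only [Finset.mem_Icc] at hi hj
  have hle : k (j+1) ≤ k j := by
    rcases eq_or_lt_of_le hj.2 with h | h
    · rw [h, hk0]; omega
    · exact hk j (j+1) (by omega) (by omega) (by omega)
  unfold pochPoly
  rw [mul_comm, ← Nat.Ico_zero_eq_range, ← Nat.Ico_zero_eq_range]
  exact Finset.prod_Ico_consecutive _ (Nat.zero_le _) (by omega)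

lemma QT_root (d r : ℕ) (k : ℕ → ℕ) {z : ℂ} (h : (QT d r k).eval z = 0) :
    ∃ i j t : ℕ, 1 ≤ i ∧ i ≤ j ∧ j ≤ r ∧ k i + k (j+1) ≤ t ∧ t < k i + k j ∧
      z = (((1 + (d : ℝ) * ((i : ℝ) + (j : ℝ) - 2) / 2 - (t : ℝ)) : ℝ) : ℂ) := by
  unfold QT at h
  rw [Polynomial.eval_prod, Finset.prod_eq_zero_iff] at h
  obtain ⟨i, hi, h⟩ := h
  rw [Polynomial.eval_prod, Finset.prod_eq_zero_iff] at h
  obtain ⟨j, hj, h⟩ := h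
  rw [Polynomial.eval_prod, Finset.prod_eq_zero_iff] at h
  obtain ⟨t, ht, h⟩ := h
  simp only [Finset.mem_Icc] at hi hj
  simp only [Finset.mem_Ico] at ht
  refine ⟨i, j, t, hi.1, hj.1, hj.2, ht.1, ht.2, ?_⟩
  simp only [Polynomial.eval_add, Polynomial.eval_sub, Polynomial.eval_X,
    Polynomial.eval_C, Polynomial.eval_natCast] at h
  have hz : z = 1 + (d : ℂ) * ((i : ℂ) + (j : ℂ) - 2) / 2 - (t : ℂ) := by
    linear_combination h
  rw [hz]; push_cast; ring

/-- Tensor product case: `C̃^d(ν,k)` is a polynomial in `ν`; location of its zeros;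
and its nonvanishing at `ν = λ + μ` with `λ, μ ≥ dm/2` when `k_{m+1} = 0`. -/
theorem zeroes_tensor (d r : ℕ) (hd : 0 < d) (hr : 0 < r)
    (k : ℕ → ℕ) (hk : ∀ i j, 1 ≤ i → i ≤ j → j ≤ r → k j ≤ k i)
    (hk0 : k (r + 1) = 0) :
    denomT d r k ∣ numerT d r k ∧
    ∀ R : Polynomial ℂ, R * denomT d r k = numerT d r k →
      ((∀ m₁ m₂ : ℕ, 1 ≤ m₁ → m₁ ≤ m₂ → m₂ ≤ r →
          (∀ a, 1 ≤ a → a ≤ m₁ → k a = k 1) → k (m₂ + 1) = 0 →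
          ((1 ≤ k 1 → ∀ z : ℂ, R.IsRoot z → z.im = 0 ∧
              (d : ℝ) / 2 * ((m₁ : ℝ) - 1) - 2 * (k 1 : ℝ) + 2 ≤ z.re ∧
              z.re ≤ (d : ℝ) * ((m₂ : ℝ) - 1) - (k m₂ : ℝ) + 1) ∧
            (k 1 = 0 → R = 1))) ∧
        ∀ m : ℕ, m < r → k (m + 1) = 0 →
          ∀ lam mu : ℝ, (d : ℝ) * (m : ℝ) / 2 ≤ lam → (d : ℝ) * (m : ℝ) / 2 ≤ mu →
            R.eval ((lam : ℂ) + (mu : ℂ)) ≠ 0) := by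
  have key := QT_mul_denomT d r k hk hk0
  have hden : denomT d r k ≠ 0 := (denomT_monic d r k).ne_zero
  have hd1 : (1 : ℝ) ≤ (d : ℝ) := by exact_mod_cast hd
  constructor
  · exact ⟨QT d r k, by rw [← key, mul_comm]⟩
  intro R hR
  have hRQ : R = QT d r k := mul_right_cancel₀ hden (hR.trans key.symm)
  subst hRQ
  constructor
  · intro m₁ m₂ hm₁ hm₁₂ hm₂ hka hkm₂
    constructor
    · intro hk1 z hz
      obtain ⟨i, j, t, hi1, hij, hjr, ht1, ht2, hzeq⟩ := QT_root d r k hz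
      subst hzeq
      refine ⟨Complex.ofReal_im _, ?_, ?_⟩ <;> rw [Complex.ofReal_re]
      · have hjm : m₁ ≤ j := by
          by_contra hlt
          push_neg at hlt
          have h1 : k j = k 1 := hka j (by omega) (by omega)
          have h2 : k (j+1) = k 1 := hka (j+1) (by omega) (by omega)
          omega
        have hki : k i ≤ k 1 := hk 1 i le_rfl hi1 (le_trans hij hjr)
        have hkj : k j ≤ k 1 := hk 1 j le_rfl (by omega) hjr
        have hc1 : (t : ℝ) + 1 ≤ 2 * (k 1 : ℝ) := by
          have : t + 1 ≤ 2 * k 1 := by omega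
          exact_mod_cast this
        have hc2 : (m₁ : ℝ) + 1 ≤ (i : ℝ) + (j : ℝ) := by
          have : m₁ + 1 ≤ i + j := by omega
          exact_mod_cast this
        have hprod : (d : ℝ) * ((m₁ : ℝ) - 1) ≤ (d : ℝ) * ((i : ℝ) + (j : ℝ) - 2) :=
          mul_le_mul_of_nonneg_left (by linarith) (by linarith)
        linarith
      · have hjm : j ≤ m₂ := by
          by_contra hlt
          push_neg at hlt
          have := hk (m₂+1) j (by omega) (by omega) hjr
          omega
        have hkj : k j ≤ k i := hk i j hi1 hij hjr
        have hkm : k m₂ ≤ k j := hk j m₂ (by omega) hjm hm₂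
        have hc1 : (k m₂ : ℝ) ≤ (t : ℝ) := by
          have : k m₂ ≤ t := by omega
          exact_mod_cast this
        have hc2 : (i : ℝ) + (j : ℝ) ≤ 2 * (m₂ : ℝ) := by
          have : i + j ≤ 2 * m₂ := by omega
          exact_mod_cast this
        have hprod : (d : ℝ) * ((i : ℝ) + (j : ℝ) - 2) ≤ (d : ℝ) * (2 * (m₂ : ℝ) - 2) :=
          mul_le_mul_of_nonneg_left (by linarith) (by linarith)
        linarith
    · intro hk1
      unfold QT
      apply Finset.prod_eq_one
      intro i hi
      apply Finset.prod_eq_one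
      intro j hj
      simp only [Finset.mem_Icc] at hi hj
      have h1 : k i = 0 := by have := hk 1 i le_rfl hi.1 hi.2; omega
      have h2 : k j = 0 := by have := hk 1 j le_rfl (by omega) hj.2; omega
      have h3 : k (j+1) = 0 := by
        rcases eq_or_lt_of_le hj.2 with h | h
        · rw [h]; exact hk0
        · have := hk 1 (j+1) le_rfl (by omega) (by omega); omega
      rw [h1, h2, h3, Finset.Ico_self, Finset.prod_empty]
  · intro m hmr hkm lam mu hlam hmu hEval
    obtain ⟨i, j, t, hi1, hij, hjr, ht1, ht2, hzeq⟩ := QT_root d r k hEval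
    have hkj1 : 1 ≤ k j := by omega
    have hjm : j ≤ m := by
      by_contra hlt
      push_neg at hlt
      have := hk (m+1) j (by omega) (by omega) hjr
      omega
    have hki : 1 ≤ k i := le_trans hkj1 (hk i j hi1 hij hjr)
    have hre : lam + mu = 1 + (d : ℝ) * ((i : ℝ) + (j : ℝ) - 2) / 2 - (t : ℝ) := by
      have := congrArg Complex.re hzeq
      simpa using this
    have hc1 : (1 : ℝ) ≤ (t : ℝ) := by
      have : 1 ≤ t := by omega
      exact_mod_cast this
    have hc2 : (i : ℝ) + (j : ℝ) ≤ 2 * (m : ℝ) := by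
      have : i + j ≤ 2 * m := by omega
      exact_mod_cast this
    have hprod : (d : ℝ) * ((i : ℝ) + (j : ℝ) - 2) ≤ (d : ℝ) * (2 * (m : ℝ) - 2) :=
      mul_le_mul_of_nonneg_left (by linarith) (by linarith)
    linarith
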